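/- arXiv:1910.05699 — 6 statements merged into one kernel-verified Lean document; each statement's English description precedes it below -/
import Mathlib

section
/- For any two nonzero vectors v, w ∈ ℂⁿ, the total variation distance between the distributions P_v and P_w satisfies ‖P_v − P_w‖_{TV} ≤ 2‖v − w‖ / ‖v‖. -/
/-- The ℓ² norm of a vector. -/
noncomputable def l2norm {n : Type*} [Fintype n] (v : n → ℂ) : ℝ :=
  Real.sqrt (∑ i, ‖v i‖ ^ 2)

/-- The probability distribution associated with a nonzero vector `v`:
`P_v(i) = |v_i|² / ‖v‖²`. -/
noncomputable def vecDist {n : Type*} [Fintype n] (v : n → ℂ) (i : n) : ℝ :=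
  ‖v i‖ ^ 2 / l2norm v ^ 2

/-- The total variation distance between the distributions of two vectors. -/
noncomputable def tvDist {n : Type*} [Fintype n] (v w : n → ℂ) : ℝ :=
  (1 / 2) * ∑ i, |vecDist v i - vecDist w i|

noncomputable def toE {n : Type*} [Fintype n] (x : n → ℝ) : EuclideanSpace ℝ n :=
  (WithLp.equiv 2 _).symm x

lemma toE_norm {n : Type*} [Fintype n] (x : n → ℝ) :
    ‖toE x‖ = Real.sqrt (∑ i, x i ^ 2) := by
  rw [toE, EuclideanSpace.norm_eq]
  simp [Real.norm_eq_abs, sq_abs]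

lemma cauchy_schwarz_sum {n : Type*} [Fintype n] (x y : n → ℝ) :
    ∑ i, x i * y i ≤ Real.sqrt (∑ i, x i ^ 2) * Real.sqrt (∑ i, y i ^ 2) := by
  have := real_inner_le_norm (toE x) (toE y)
  rw [EuclideanSpace.norm_eq, EuclideanSpace.norm_eq, PiLp.inner_apply] at this
  rw [Finset.sum_congr rfl fun i _ => mul_comm (x i) (y i)]
  simpa [toE, Real.norm_eq_abs, sq_abs] using this

noncomputable def toEC {n : Type*} [Fintype n] (v : n → ℂ) : EuclideanSpace ℂ n :=
  (WithLp.equiv 2 _).symm v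

lemma l2norm_eq {n : Type*} [Fintype n] (v : n → ℂ) : l2norm v = ‖toEC v‖ := by
  rw [toEC, EuclideanSpace.norm_eq, l2norm]
  simp [WithLp.equiv_symm_apply, PiLp.toLp_apply]

lemma l2norm_pos {n : Type*} [Fintype n] {v : n → ℂ} (hv : v ≠ 0) : 0 < l2norm v := by
  rw [l2norm_eq]
  have : toEC v ≠ 0 := by
    intro h
    apply hv
    funext i
    have := congrArg (fun x : EuclideanSpace ℂ n => x i) h
    simpa [toEC, WithLp.equiv_symm_apply, PiLp.toLp_apply] using this
  exact norm_pos_iff.mpr this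

lemma l2norm_sq {n : Type*} [Fintype n] (v : n → ℂ) :
    l2norm v ^ 2 = ∑ i, ‖v i‖ ^ 2 := by
  rw [l2norm, Real.sq_sqrt]
  positivity

set_option maxHeartbeats 2000000 in
theorem tv_dist_le {n : Type*} [Fintype n] (v w : n → ℂ) (hv : v ≠ 0) (hw : w ≠ 0) :
    tvDist v w ≤ 2 * l2norm (v - w) / l2norm v := by
  set A := l2norm v with hAdef
  set B := l2norm w with hBdef
  set L := l2norm (v - w) with hLdef
  have hA : 0 < A := l2norm_pos hv
  have hB : 0 < B := l2norm_pos hw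
  have hL : 0 ≤ L := Real.sqrt_nonneg _
  set a : n → ℝ := fun i => ‖v i‖ / A with ha
  set b : n → ℝ := fun i => ‖w i‖ / B with hb
  have ha_nonneg : ∀ i, 0 ≤ a i := fun i => by positivity
  have hb_nonneg : ∀ i, 0 ≤ b i := fun i => by positivity
  have hsum_a : ∑ i, a i ^ 2 = 1 := by
    simp only [ha, div_pow]
    rw [← Finset.sum_div, ← l2norm_sq, div_self (by positivity)]
  have hsum_b : ∑ i, b i ^ 2 = 1 := by
    simp only [hb, div_pow]
    rw [← Finset.sum_div, ← l2norm_sq, div_self (by positivity)]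
  -- step 1: pointwise rewrite
  have step1 : ∀ i, |vecDist v i - vecDist w i| = |a i - b i| * (a i + b i) := by
    intro i
    have : vecDist v i - vecDist w i = a i ^ 2 - b i ^ 2 := by
      simp [vecDist, ha, hb, div_pow, ← hAdef, ← hBdef]
    rw [this, sq_sub_sq, abs_mul, abs_of_nonneg (by positivity)]
    ring
  -- step 2: Cauchy-Schwarz
  have step2 : ∑ i, |a i - b i| * (a i + b i) ≤
      Real.sqrt (∑ i, (a i - b i) ^ 2) * Real.sqrt (∑ i, (a i + b i) ^ 2) := by
    have := cauchy_schwarz_sum (fun i => |a i - b i|) (fun i => a i + b i)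
    simpa [sq_abs] using this
  -- step 3: second factor ≤ 2
  have step3 : Real.sqrt (∑ i, (a i + b i) ^ 2) ≤ 2 := by
    have h1 : ∑ i, (a i + b i) ^ 2 ≤ 4 := by
      have : ∑ i, (a i + b i) ^ 2 ≤ ∑ i, (2 * a i ^ 2 + 2 * b i ^ 2) := by
        apply Finset.sum_le_sum
        intro i _
        nlinarith [sq_nonneg (a i - b i)]
      calc ∑ i, (a i + b i) ^ 2 ≤ ∑ i, (2 * a i ^ 2 + 2 * b i ^ 2) := this
        _ = 4 := by
          rw [Finset.sum_add_distrib, ← Finset.mul_sum, ← Finset.mul_sum, hsum_a, hsum_b]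
          ring
    calc Real.sqrt (∑ i, (a i + b i) ^ 2) ≤ Real.sqrt 4 :=
          Real.sqrt_le_sqrt h1
      _ = 2 := by
          rw [show (4 : ℝ) = 2 ^ 2 by norm_num, Real.sqrt_sq (by norm_num)]
  -- step 4: first factor ≤ 2L/A
  have step4 : Real.sqrt (∑ i, (a i - b i) ^ 2) ≤ 2 * L / A := by
    set y : n → ℝ := fun i => (‖v i‖ - ‖w i‖) / A with hy
    set z : n → ℝ := fun i => ‖w i‖ * (1 / A - 1 / B) with hz
    have hxyz : (fun i => a i - b i) = y + z := by
      funext i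
      simp only [ha, hb, hy, hz, Pi.add_apply]
      field_simp
      ring
    have htri : ‖toE fun i => a i - b i‖ ≤ ‖toE y‖ + ‖toE z‖ := by
      have : toE (fun i => a i - b i) = toE y + toE z := by
        rw [hxyz]; rfl
      rw [this]
      exact norm_add_le _ _
    have hy_bound : ‖toE y‖ ≤ L / A := by
      rw [toE_norm]
      have h1 : ∑ i, y i ^ 2 ≤ ∑ i, ‖v i - w i‖ ^ 2 / A ^ 2 := by
        apply Finset.sum_le_sum
        intro i _
        rw [hy]
        rw [div_pow]
        apply div_le_div_of_nonneg_right _ (by positivity)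
        · rw [← sq_abs (‖v i‖ - ‖w i‖)]
          exact pow_le_pow_left₀ (abs_nonneg _) (abs_norm_sub_norm_le _ _) 2
      calc Real.sqrt (∑ i, y i ^ 2) ≤ Real.sqrt (∑ i, ‖v i - w i‖ ^ 2 / A ^ 2) :=
            Real.sqrt_le_sqrt h1
        _ = L / A := by
            rw [← Finset.sum_div, Real.sqrt_div (by positivity), Real.sqrt_sq hA.le,
              hLdef, l2norm]
            simp [Pi.sub_apply]
    have hz_bound : ‖toE z‖ ≤ L / A := by
      rw [toE_norm]
      have hzsq : ∑ i, z i ^ 2 = (1 / A - 1 / B) ^ 2 * B ^ 2 := by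
        simp only [hz, mul_pow]
        rw [← Finset.sum_mul, ← l2norm_sq, ← hBdef]
        ring
      rw [hzsq, Real.sqrt_mul (by positivity), Real.sqrt_sq_eq_abs, Real.sqrt_sq hB.le]
      have heq : 1 / A - 1 / B = (B - A) / (A * B) := by
        field_simp
      have h1 : |1 / A - 1 / B| = |B - A| / (A * B) := by
        rw [heq, abs_div, abs_of_pos (mul_pos hA hB)]
      rw [h1]
      have hBA : |B - A| ≤ L := by
        have := abs_norm_sub_norm_le (toEC w) (toEC v)
        have heq : toEC w - toEC v = toEC (w - v) := rfl
        rw [heq, ← l2norm_eq, ← l2norm_eq, ← l2norm_eq, ← hBdef, ← hAdef] at this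
        have : |B - A| ≤ l2norm (w - v) := this
        have hswap : l2norm (w - v) = L := by
          rw [hLdef, l2norm, l2norm]
          congr 1
          apply Finset.sum_congr rfl
          intro i _
          rw [Pi.sub_apply, Pi.sub_apply, ← norm_neg]
          ring_nf
        linarith [this, hswap.le, hswap.ge]
      calc |B - A| / (A * B) * B = |B - A| / A := by
            field_simp
        _ ≤ L / A := by gcongr
    have : Real.sqrt (∑ i, (a i - b i) ^ 2) = ‖toE fun i => a i - b i‖ :=
      (toE_norm _).symm
    rw [this]
    calc ‖toE fun i => a i - b i‖ ≤ ‖toE y‖ + ‖toE z‖ := htri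
      _ ≤ L / A + L / A := add_le_add hy_bound hz_bound
      _ = 2 * L / A := by ring
  -- assemble
  have hfirst_nonneg : 0 ≤ Real.sqrt (∑ i, (a i - b i) ^ 2) := Real.sqrt_nonneg _
  have hsum : ∑ i, |vecDist v i - vecDist w i| ≤ (2 * L / A) * 2 := by
    calc ∑ i, |vecDist v i - vecDist w i|
        = ∑ i, |a i - b i| * (a i + b i) := Finset.sum_congr rfl fun i _ => step1 i
      _ ≤ Real.sqrt (∑ i, (a i - b i) ^ 2) * Real.sqrt (∑ i, (a i + b i) ^ 2) := step2
      _ ≤ Real.sqrt (∑ i, (a i - b i) ^ 2) * 2 :=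
          mul_le_mul_of_nonneg_left step3 hfirst_nonneg
      _ ≤ (2 * L / A) * 2 := by
          apply mul_le_mul_of_nonneg_right step4 (by norm_num)
  rw [tvDist]
  linarith
end

section
/- Let M ∈ ℂ^{m×n} and let f, g, h : ℝ_{≥0} → ℝ_{≥0} satisfy f(0) = g(0) = h(0) = 0 and h(σ) = f(σ)·g(σ) for every singular value σ of M. Then Φ_f(M) · Φ_g(M*) = Ψ_h(MM*), where Ψ_h denotes the corresponding transformation applied to the positive semi-definite matrix MM* (i.e., applying h to its eigenvalues). In particular, with h(x) = f(√x)/√x (for x > 0, h(0)=0), one has Φ_{inv}(M) · Φ_f(M*) = Φ_h(MM*). -/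
open Matrix

lemma vmv_mul' {m p q : ℕ} (a : Fin m → ℂ) (b c : Fin p → ℂ) (e : Fin q → ℂ) :
    vecMulVec a b * vecMulVec c e = (b ⬝ᵥ c) • vecMulVec a e := by
  ext i j
  simp only [Matrix.mul_apply, Matrix.vecMulVec_apply, Matrix.smul_apply, smul_eq_mul,
    dotProduct, Finset.sum_mul]
  exact Finset.sum_congr rfl fun l _ => by ring

lemma sum_smul_vmv_mul {k m n p : ℕ} (a : Fin k → Fin m → ℂ) (b c : Fin k → Fin n → ℂ)
    (e : Fin k → Fin p → ℂ)
    (hbc : ∀ i j, star (b i) ⬝ᵥ c j = if i = j then 1 else 0) (w w' : Fin k → ℂ) :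
    (∑ i, w i • vecMulVec (a i) (star (b i))) * (∑ j, w' j • vecMulVec (c j) (star (e j))) =
      ∑ i, (w i * w' i) • vecMulVec (a i) (star (e i)) := by
  rw [Matrix.sum_mul]
  refine Finset.sum_congr rfl fun i _ => ?_
  rw [Matrix.mul_sum]
  have step : ∀ j, (w i • vecMulVec (a i) (star (b i))) * (w' j • vecMulVec (c j) (star (e j)))
      = if i = j then (w i * w' j) • vecMulVec (a i) (star (e j)) else 0 := by
    intro j
    rw [Matrix.smul_mul, Matrix.mul_smul, vmv_mul', hbc]
    by_cases hij : i = j <;> simp [hij, smul_smul]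
  simp only [step]
  simp

/-- Let `M = Σᵢ σᵢ uᵢ vᵢ*` be an SVD. Let `f, g, h : ℝ≥0 → ℝ≥0` vanish at `0` and satisfy
`h(σ²) = f(σ)·g(σ)` for every singular value `σ` of `M` (so that `h` applied to the
eigenvalues `σ²` of `MM*` matches `f·g` on singular values). Then
`Φ_f(M) · Φ_g(M*) = Ψ_h(MM*)`, where `Ψ_h` applies `h` to the eigenvalues of the positive
semi-definite matrix `MM* = Q D Q*` (with `Q` unitary, `D` diagonal nonnegative). -/
theorem svt_mul_svt_eq_eigen_transform {m n k : ℕ}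
    (σ : Fin k → ℝ) (u : Fin k → Fin m → ℂ) (v : Fin k → Fin n → ℂ)
    (hu : ∀ i j, star (u i) ⬝ᵥ u j = if i = j then 1 else 0)
    (hv : ∀ i j, star (v i) ⬝ᵥ v j = if i = j then 1 else 0)
    (hσ : ∀ i, 0 ≤ σ i)
    (M : Matrix (Fin m) (Fin n) ℂ)
    (hM : M = ∑ i, ((σ i : ℝ) : ℂ) • vecMulVec (u i) (star (v i)))
    (f g h : ℝ → ℝ) (hf0 : f 0 = 0) (hg0 : g 0 = 0) (hh0 : h 0 = 0)
    (hfnn : ∀ x, 0 ≤ x → 0 ≤ f x) (hgnn : ∀ x, 0 ≤ x → 0 ≤ g x)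
    (hhnn : ∀ x, 0 ≤ x → 0 ≤ h x)
    (hfgh : ∀ i, h ((σ i) ^ 2) = f (σ i) * g (σ i))
    (Q : Matrix (Fin m) (Fin m) ℂ) (hQ1 : Q * Qᴴ = 1) (hQ2 : Qᴴ * Q = 1)
    (d : Fin m → ℝ) (hd : ∀ i, 0 ≤ d i)
    (hMM : M * Mᴴ = Q * diagonal (fun i => ((d i : ℝ) : ℂ)) * Qᴴ) :
    (∑ i, ((f (σ i) : ℝ) : ℂ) • vecMulVec (u i) (star (v i))) *
        (∑ i, ((g (σ i) : ℝ) : ℂ) • vecMulVec (v i) (star (u i))) =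
      Q * diagonal (fun i => ((h (d i) : ℝ) : ℂ)) * Qᴴ := by
  classical
  set E : Fin k → Matrix (Fin m) (Fin m) ℂ := fun i => vecMulVec (u i) (star (u i)) with hE
  set dc : Fin m → ℂ := fun i => ((d i : ℝ) : ℂ) with hdc
  -- conjugate transpose of M
  have hMH : Mᴴ = ∑ i, ((σ i : ℝ) : ℂ) • vecMulVec (v i) (star (u i)) := by
    rw [hM]
    ext i j
    simp only [conjTranspose_apply, Matrix.sum_apply, Matrix.smul_apply, vecMulVec_apply,
      Pi.star_apply, smul_eq_mul, star_sum, star_mul', star_star, Complex.star_def,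
      Complex.conj_ofReal, Complex.conj_conj]
    exact Finset.sum_congr rfl fun t _ => by ring
  have hA : M * Mᴴ = ∑ i, (((σ i : ℝ) : ℂ)^2) • E i := by
    rw [hMH, hM, sum_smul_vmv_mul u v v u hv]
    exact Finset.sum_congr rfl fun i _ => by rw [sq]
  have hApow : ∀ r : ℕ, (M * Mᴴ)^(r+1) = ∑ i, ((((σ i : ℝ) : ℂ)^2)^(r+1)) • E i := by
    intro r
    induction r with
    | zero => simpa using hA
    | succ r ih =>
      rw [pow_succ, ih, hA, hE, sum_smul_vmv_mul u u u u hu]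
      refine Finset.sum_congr rfl fun i _ => ?_
      rw [← pow_succ]
  have haevalA : ∀ R : Polynomial ℂ,
      (M * Mᴴ) * (Polynomial.aeval (M * Mᴴ) R) =
        ∑ i, (((σ i : ℝ) : ℂ)^2 * R.eval (((σ i : ℝ) : ℂ)^2)) • E i := by
    intro R
    induction R using Polynomial.induction_on' with
    | add p q hp hq =>
      rw [map_add, mul_add, hp, hq, ← Finset.sum_add_distrib]
      refine Finset.sum_congr rfl fun i _ => ?_
      rw [Polynomial.eval_add, ← add_smul]
      congr 1
      ring
    | monomial r c =>
      rw [← Polynomial.C_mul_X_pow_eq_monomial, _root_.map_mul, map_pow, Polynomial.aeval_C,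
        Polynomial.aeval_X, ← Algebra.smul_def, mul_smul_comm, ← pow_succ', hApow r,
        Finset.smul_sum]
      refine Finset.sum_congr rfl fun i _ => ?_
      rw [smul_smul]
      congr 1
      rw [Polynomial.eval_mul, Polynomial.eval_C, Polynomial.eval_pow, Polynomial.eval_X]
      ring
  have hQpow : ∀ r : ℕ, (Q * diagonal dc * Qᴴ)^r = Q * diagonal (fun i => dc i ^ r) * Qᴴ := by
    intro r
    induction r with
    | zero => simp [hQ1]
    | succ r ih =>
      rw [pow_succ, ih]
      have h1 : Q * diagonal (fun i => dc i ^ r) * Qᴴ * (Q * diagonal dc * Qᴴ) =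
          Q * (diagonal (fun i => dc i ^ r) * ((Qᴴ * Q) * (diagonal dc * Qᴴ))) := by
        simp only [Matrix.mul_assoc]
      rw [h1, hQ2, one_mul, ← Matrix.mul_assoc (diagonal _), diagonal_mul_diagonal,
        ← Matrix.mul_assoc]
      congr 2
  have haevalQ : ∀ R : Polynomial ℂ,
      Polynomial.aeval (Q * diagonal dc * Qᴴ) R =
        Q * diagonal (fun i => R.eval (dc i)) * Qᴴ := by
    intro R
    induction R using Polynomial.induction_on' with
    | add p q hp hq =>
      rw [map_add, hp, hq]
      have heq : (fun i => (p + q).eval (dc i)) = fun i => p.eval (dc i) + q.eval (dc i) := by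
        funext i; simp
      rw [heq, ← diagonal_add, Matrix.mul_add, Matrix.add_mul]
    | monomial r c =>
      rw [← Polynomial.C_mul_X_pow_eq_monomial, _root_.map_mul, map_pow, Polynomial.aeval_C,
        Polynomial.aeval_X, ← Algebra.smul_def, hQpow r, ← Matrix.smul_mul, ← Matrix.mul_smul]
      congr 2
      ext i j
      simp [Matrix.diagonal_apply, mul_ite]
  -- the interpolating polynomial
  set s : Finset ℝ :=
    insert 0 ((Finset.image (fun i => (σ i)^2) Finset.univ) ∪ Finset.image d Finset.univ) with hs
  set p : Polynomial ℝ := Lagrange.interpolate s id h with hp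
  have hpeval : ∀ x ∈ s, p.eval x = h x := by
    intro x hx
    exact Lagrange.eval_interpolate_at_node h (Set.injOn_id _) hx
  set P : Polynomial ℂ := p.map (algebraMap ℝ ℂ) with hPdef
  have hPeval : ∀ x : ℝ, P.eval ((x : ℝ) : ℂ) = ((p.eval x : ℝ) : ℂ) := by
    intro x
    rw [hPdef, Polynomial.eval_map]
    exact Polynomial.eval₂_hom (algebraMap ℝ ℂ) x
  have h0s : (0:ℝ) ∈ s := Finset.mem_insert_self _ _
  have hσs : ∀ i, (σ i)^2 ∈ s := fun i =>
    Finset.mem_insert_of_mem (Finset.mem_union_left _ (Finset.mem_image_of_mem _ (Finset.mem_univ i)))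
  have hds : ∀ i, d i ∈ s := fun i =>
    Finset.mem_insert_of_mem (Finset.mem_union_right _ (Finset.mem_image_of_mem _ (Finset.mem_univ i)))
  have hXdvd : Polynomial.X ∣ P := by
    rw [Polynomial.X_dvd_iff, Polynomial.coeff_zero_eq_eval_zero]
    have := hPeval 0
    rw [hpeval 0 h0s, hh0] at this
    simpa using this
  obtain ⟨R, hR⟩ := hXdvd
  calc (∑ i, ((f (σ i) : ℝ) : ℂ) • vecMulVec (u i) (star (v i))) *
        (∑ i, ((g (σ i) : ℝ) : ℂ) • vecMulVec (v i) (star (u i)))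
      = ∑ i, (((f (σ i) : ℝ) : ℂ) * ((g (σ i) : ℝ) : ℂ)) • E i :=
        sum_smul_vmv_mul u v v u hv _ _
    _ = ∑ i, (((σ i : ℝ) : ℂ)^2 * R.eval (((σ i : ℝ) : ℂ)^2)) • E i := by
        refine Finset.sum_congr rfl fun i _ => ?_
        congr 1
        have hc : (((σ i : ℝ) : ℂ))^2 = (((σ i)^2 : ℝ) : ℂ) := by push_cast; ring
        have h1 : P.eval (((σ i : ℝ) : ℂ)^2) = ((h ((σ i)^2) : ℝ) : ℂ) := by
          rw [hc, hPeval, hpeval _ (hσs i)]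
        have h2 : P.eval (((σ i : ℝ) : ℂ)^2) =
            ((σ i : ℝ) : ℂ)^2 * R.eval (((σ i : ℝ) : ℂ)^2) := by
          rw [hR]; simp
        rw [← h2, h1, hfgh i]
        push_cast
        ring
    _ = (M * Mᴴ) * (Polynomial.aeval (M * Mᴴ) R) := (haevalA R).symm
    _ = Polynomial.aeval (M * Mᴴ) P := by rw [hR, _root_.map_mul, Polynomial.aeval_X]
    _ = Polynomial.aeval (Q * diagonal dc * Qᴴ) P := by rw [hMM]
    _ = Q * diagonal (fun i => P.eval (dc i)) * Qᴴ := haevalQ P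
    _ = Q * diagonal (fun i => ((h (d i) : ℝ) : ℂ)) * Qᴴ := by
        have heq : (fun i => Polynomial.eval (dc i) P) = fun i => ((h (d i) : ℝ) : ℂ) :=
          funext fun i => by
            rw [show dc i = ((d i : ℝ) : ℂ) from rfl, hPeval, hpeval _ (hds i)]
        rw [heq]
end

section
/- Let X, Y ∈ ℂ^{m×m} be positive semi-definite matrices and let S be the convex hull of the set of all nonzero eigenvalues of X and Y. Let g : ℝ_{≥0} → ℝ_{≥0} satisfy g(0) = 0 and be differentiable on S. Then ‖Φ_g(X) − Φ_g(Y)‖_F ≤ ‖X − Y‖_F · max_{σ ∈ S} ( |g'(σ)| + |g(σ)/σ| ). -/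
open Matrix

/-- The Frobenius norm of a matrix. -/
noncomputable def frobNorm {m n : Type*} [Fintype m] [Fintype n] (M : Matrix m n ℂ) : ℝ :=
  Real.sqrt (∑ i, ∑ j, ‖M i j‖ ^ 2)

lemma trace_re_eq {m : ℕ} (A : Matrix (Fin m) (Fin m) ℂ) :
    (Matrix.trace (Aᴴ * A)).re = ∑ i, ∑ j, ‖A i j‖ ^ 2 := by
  simp only [Matrix.trace, Matrix.diag, Matrix.mul_apply, Matrix.conjTranspose_apply,
    Complex.re_sum]
  rw [Finset.sum_comm]
  congr 1; ext i; congr 1; ext j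
  simp [Complex.star_def, Complex.mul_re, Complex.sq_norm,
    Complex.normSq_apply]

lemma sum_sq_conj {m : ℕ} (Q R M : Matrix (Fin m) (Fin m) ℂ)
    (hQ : Q * Qᴴ = 1) (hR : R * Rᴴ = 1) :
    ∑ i, ∑ j, ‖(Qᴴ * M * R) i j‖ ^ 2 = ∑ i, ∑ j, ‖M i j‖ ^ 2 := by
  rw [← trace_re_eq, ← trace_re_eq]
  congr 1
  calc Matrix.trace ((Qᴴ * M * R)ᴴ * (Qᴴ * M * R))
      = Matrix.trace (Rᴴ * (Mᴴ * ((Q * Qᴴ) * (M * R)))) := by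
        simp only [conjTranspose_mul, conjTranspose_conjTranspose, Matrix.mul_assoc]
    _ = Matrix.trace (Rᴴ * (Mᴴ * (M * R))) := by rw [hQ, Matrix.one_mul]
    _ = Matrix.trace ((Mᴴ * (M * R)) * Rᴴ) := Matrix.trace_mul_comm _ _
    _ = Matrix.trace ((Mᴴ * M) * (R * Rᴴ)) := by simp only [Matrix.mul_assoc]
    _ = Matrix.trace (Mᴴ * M) := by rw [hR, Matrix.mul_one]

lemma conj_entry {m : ℕ} (Qx Qy : Matrix (Fin m) (Fin m) ℂ)
    (hQx2 : Qxᴴ * Qx = 1) (hQy2 : Qyᴴ * Qy = 1)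
    (f h : Fin m → ℝ) (i j : Fin m) :
    (Qxᴴ * (Qx * diagonal (fun i => ((f i : ℝ) : ℂ)) * Qxᴴ -
      Qy * diagonal (fun i => ((h i : ℝ) : ℂ)) * Qyᴴ) * Qy) i j
      = (((f i - h j : ℝ)) : ℂ) * (Qxᴴ * Qy) i j := by
  have e1 : Qxᴴ * (Qx * diagonal (fun i => ((f i : ℝ) : ℂ)) * Qxᴴ) * Qy
      = diagonal (fun i => ((f i : ℝ) : ℂ)) * (Qxᴴ * Qy) := by
    calc Qxᴴ * (Qx * diagonal (fun i => ((f i : ℝ) : ℂ)) * Qxᴴ) * Qy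
        = (Qxᴴ * Qx) * diagonal (fun i => ((f i : ℝ) : ℂ)) * (Qxᴴ * Qy) := by
          simp only [Matrix.mul_assoc]
      _ = _ := by rw [hQx2, Matrix.one_mul]
  have e2 : Qxᴴ * (Qy * diagonal (fun i => ((h i : ℝ) : ℂ)) * Qyᴴ) * Qy
      = (Qxᴴ * Qy) * diagonal (fun i => ((h i : ℝ) : ℂ)) := by
    calc Qxᴴ * (Qy * diagonal (fun i => ((h i : ℝ) : ℂ)) * Qyᴴ) * Qy
        = (Qxᴴ * Qy) * diagonal (fun i => ((h i : ℝ) : ℂ)) * (Qyᴴ * Qy) := by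
          simp only [Matrix.mul_assoc]
      _ = _ := by rw [hQy2, Matrix.mul_one]
  rw [Matrix.mul_sub, Matrix.sub_mul, Matrix.sub_apply, e1, e2,
    Matrix.diagonal_mul, Matrix.mul_diagonal]
  push_cast
  ring

lemma key_lt (g : ℝ → ℝ) (hg0 : g 0 = 0) (t : Set ℝ)
    (hdiff : ∀ x ∈ convexHull ℝ (t \ {0}), DifferentiableAt ℝ g x)
    (C : ℝ) (hC : ∀ x ∈ convexHull ℝ (t \ {0}), |deriv g x| + |g x / x| ≤ C)
    {a b : ℝ} (ha : a ∈ t) (hb : b ∈ t) (hab : a < b) :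
    |g b - g a| ≤ C * (b - a) := by
  by_cases ha0 : a = 0
  · subst ha0
    have hb0 : b ≠ 0 := ne_of_gt hab
    have hbH : b ∈ convexHull ℝ (t \ {0}) :=
      subset_convexHull ℝ _ ⟨hb, by simp [hb0]⟩
    have h2 : |g b / b| ≤ C :=
      le_trans (le_add_of_nonneg_left (abs_nonneg _)) (hC b hbH)
    rw [hg0, sub_zero, sub_zero]
    have : |g b| = |g b / b| * b := by
      rw [abs_div, abs_of_pos hab]
      field_simp
    rw [this]
    exact mul_le_mul_of_nonneg_right h2 (le_of_lt hab)
  · by_cases hb0 : b = 0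
    · subst hb0
      have haH : a ∈ convexHull ℝ (t \ {0}) :=
        subset_convexHull ℝ _ ⟨ha, by simp [ha0]⟩
      have h2 : |g a / a| ≤ C :=
        le_trans (le_add_of_nonneg_left (abs_nonneg _)) (hC a haH)
      rw [hg0, zero_sub, abs_neg]
      have : |g a| = |g a / a| * (0 - a) := by
        rw [abs_div, abs_of_neg hab, zero_sub]
        field_simp
      rw [this]
      exact mul_le_mul_of_nonneg_right h2 (by linarith)
    · have haH : a ∈ convexHull ℝ (t \ {0}) :=
        subset_convexHull ℝ _ ⟨ha, by simp [ha0]⟩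
      have hbH : b ∈ convexHull ℝ (t \ {0}) :=
        subset_convexHull ℝ _ ⟨hb, by simp [hb0]⟩
      have hIcc : Set.Icc a b ⊆ convexHull ℝ (t \ {0}) :=
        (convex_convexHull ℝ _).ordConnected.out haH hbH
      have hcont : ContinuousOn g (Set.Icc a b) := fun x hx =>
        ((hdiff x (hIcc hx)).continuousAt).continuousWithinAt
      obtain ⟨c, hc, hderiv⟩ := exists_deriv_eq_slope g hab hcont
        (fun x hx => (hdiff x (hIcc (Set.Ioo_subset_Icc_self hx))).differentiableWithinAt)
      have hba : b - a ≠ 0 := by linarith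
      have heq : g b - g a = deriv g c * (b - a) := by
        field_simp at hderiv
        linarith [hderiv]
      have hcC : |deriv g c| ≤ C :=
        le_trans (le_add_of_nonneg_right (abs_nonneg _))
          (hC c (hIcc (Set.Ioo_subset_Icc_self hc)))
      rw [heq, abs_mul, abs_of_pos (by linarith : (0:ℝ) < b - a)]
      exact mul_le_mul_of_nonneg_right hcC (by linarith)

lemma key_lip (g : ℝ → ℝ) (hg0 : g 0 = 0) (t : Set ℝ)
    (hdiff : ∀ x ∈ convexHull ℝ (t \ {0}), DifferentiableAt ℝ g x)
    (C : ℝ) (hC : ∀ x ∈ convexHull ℝ (t \ {0}), |deriv g x| + |g x / x| ≤ C)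
    {a b : ℝ} (ha : a ∈ t) (hb : b ∈ t) :
    |g a - g b| ≤ C * |a - b| := by
  rcases lt_trichotomy a b with h | h | h
  · rw [abs_sub_comm, abs_of_neg (by linarith : a - b < 0)]
    simpa using key_lt g hg0 t hdiff C hC ha hb h
  · simp [h]
  · rw [abs_of_pos (by linarith : 0 < a - b)]
    exact key_lt g hg0 t hdiff C hC hb ha h

/-- Bound on the distance between singular value transformations of two positive
semi-definite matrices `X = Qx D_x Qx*` and `Y = Qy D_y Qy*`: if `g(0) = 0` and `g` is
differentiable on the convex hull `S` of the nonzero eigenvalues, then for any `C` bounding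
`|g'(σ)| + |g(σ)/σ|` on `S`,
`‖Φ_g(X) − Φ_g(Y)‖_F ≤ ‖X − Y‖_F · C`. -/
theorem svt_dist_le {m : ℕ}
    (X Y : Matrix (Fin m) (Fin m) ℂ)
    (Qx Qy : Matrix (Fin m) (Fin m) ℂ)
    (hQx1 : Qx * Qxᴴ = 1) (hQx2 : Qxᴴ * Qx = 1)
    (hQy1 : Qy * Qyᴴ = 1) (hQy2 : Qyᴴ * Qy = 1)
    (dx dy : Fin m → ℝ) (hdx : ∀ i, 0 ≤ dx i) (hdy : ∀ i, 0 ≤ dy i)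
    (hX : X = Qx * diagonal (fun i => ((dx i : ℝ) : ℂ)) * Qxᴴ)
    (hY : Y = Qy * diagonal (fun i => ((dy i : ℝ) : ℂ)) * Qyᴴ)
    (g : ℝ → ℝ) (hg0 : g 0 = 0) (hgnn : ∀ x, 0 ≤ x → 0 ≤ g x)
    (hdiff : ∀ x ∈ convexHull ℝ ((Set.range dx ∪ Set.range dy) \ {0}),
      DifferentiableAt ℝ g x)
    (C : ℝ)
    (hC : ∀ x ∈ convexHull ℝ ((Set.range dx ∪ Set.range dy) \ {0}),
      |deriv g x| + |g x / x| ≤ C) :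
    frobNorm (Qx * diagonal (fun i => ((g (dx i) : ℝ) : ℂ)) * Qxᴴ -
        Qy * diagonal (fun i => ((g (dy i) : ℝ) : ℂ)) * Qyᴴ) ≤
      frobNorm (X - Y) * C := by
  by_cases hC0 : 0 ≤ C
  · -- main case
    rw [hX, hY]
    set A := Qx * diagonal (fun i => ((g (dx i) : ℝ) : ℂ)) * Qxᴴ -
        Qy * diagonal (fun i => ((g (dy i) : ℝ) : ℂ)) * Qyᴴ with hA
    set B := Qx * diagonal (fun i => ((dx i : ℝ) : ℂ)) * Qxᴴ -
        Qy * diagonal (fun i => ((dy i : ℝ) : ℂ)) * Qyᴴ with hB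
    have hfrobA : frobNorm A = Real.sqrt (∑ i, ∑ j,
        (|g (dx i) - g (dy j)| * ‖(Qxᴴ * Qy) i j‖) ^ 2) := by
      rw [frobNorm, ← sum_sq_conj Qx Qy A hQx1 hQy1]
      congr 1
      refine Finset.sum_congr rfl fun i _ => Finset.sum_congr rfl fun j _ => ?_
      rw [hA, conj_entry Qx Qy hQx2 hQy2, norm_mul, Complex.norm_real, Real.norm_eq_abs]
    have hfrobB : frobNorm B = Real.sqrt (∑ i, ∑ j,
        (|dx i - dy j| * ‖(Qxᴴ * Qy) i j‖) ^ 2) := by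
      rw [frobNorm, ← sum_sq_conj Qx Qy B hQx1 hQy1]
      congr 1
      refine Finset.sum_congr rfl fun i _ => Finset.sum_congr rfl fun j _ => ?_
      rw [hB, conj_entry Qx Qy hQx2 hQy2, norm_mul, Complex.norm_real, Real.norm_eq_abs]
    rw [hfrobA, hfrobB]
    have hsum : (∑ i, ∑ j, (|g (dx i) - g (dy j)| * ‖(Qxᴴ * Qy) i j‖) ^ 2)
        ≤ C ^ 2 * ∑ i, ∑ j, (|dx i - dy j| * ‖(Qxᴴ * Qy) i j‖) ^ 2 := by
      rw [Finset.mul_sum]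
      refine Finset.sum_le_sum fun i _ => ?_
      rw [Finset.mul_sum]
      refine Finset.sum_le_sum fun j _ => ?_
      have hk : |g (dx i) - g (dy j)| ≤ C * |dx i - dy j| :=
        key_lip g hg0 _ hdiff C hC (Or.inl ⟨i, rfl⟩) (Or.inr ⟨j, rfl⟩)
      have h1 : |g (dx i) - g (dy j)| * ‖(Qxᴴ * Qy) i j‖
          ≤ C * |dx i - dy j| * ‖(Qxᴴ * Qy) i j‖ :=
        mul_le_mul_of_nonneg_right hk (norm_nonneg _)
      calc (|g (dx i) - g (dy j)| * ‖(Qxᴴ * Qy) i j‖) ^ 2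
          ≤ (C * |dx i - dy j| * ‖(Qxᴴ * Qy) i j‖) ^ 2 :=
            pow_le_pow_left₀ (mul_nonneg (abs_nonneg _) (norm_nonneg _)) h1 2
        _ = C ^ 2 * (|dx i - dy j| * ‖(Qxᴴ * Qy) i j‖) ^ 2 := by ring
    calc Real.sqrt (∑ i, ∑ j, (|g (dx i) - g (dy j)| * ‖(Qxᴴ * Qy) i j‖) ^ 2)
        ≤ Real.sqrt (C ^ 2 * ∑ i, ∑ j, (|dx i - dy j| * ‖(Qxᴴ * Qy) i j‖) ^ 2) :=
          Real.sqrt_le_sqrt hsum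
      _ = C * Real.sqrt (∑ i, ∑ j, (|dx i - dy j| * ‖(Qxᴴ * Qy) i j‖) ^ 2) := by
          rw [Real.sqrt_mul (sq_nonneg C), Real.sqrt_sq hC0]
      _ = _ := mul_comm _ _
  · -- degenerate case: C < 0 forces the eigenvalue set to be empty
    push_neg at hC0
    have hs : (Set.range dx ∪ Set.range dy) \ {0} = ∅ := by
      by_contra h
      obtain ⟨x, hx⟩ := Set.nonempty_iff_ne_empty.2 h
      have h1 := hC x (subset_convexHull ℝ _ hx)
      have h2 := abs_nonneg (deriv g x)
      have h3 := abs_nonneg (g x / x)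
      linarith
    have hdx0 : ∀ i, dx i = 0 := by
      intro i
      by_contra hne
      have : dx i ∈ (Set.range dx ∪ Set.range dy) \ {0} := ⟨Or.inl ⟨i, rfl⟩, hne⟩
      rw [hs] at this
      exact this
    have hdy0 : ∀ i, dy i = 0 := by
      intro i
      by_contra hne
      have : dy i ∈ (Set.range dx ∪ Set.range dy) \ {0} := ⟨Or.inr ⟨i, rfl⟩, hne⟩
      rw [hs] at this
      exact this
    have e1 : (fun i => ((g (dx i) : ℝ) : ℂ)) = fun _ => (0 : ℂ) :=
      funext fun i => by rw [hdx0 i, hg0]; simp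
    have e2 : (fun i => ((g (dy i) : ℝ) : ℂ)) = fun _ => (0 : ℂ) :=
      funext fun i => by rw [hdy0 i, hg0]; simp
    have e3 : (fun i => ((dx i : ℝ) : ℂ)) = fun _ => (0 : ℂ) :=
      funext fun i => by rw [hdx0 i]; simp
    have e4 : (fun i => ((dy i : ℝ) : ℂ)) = fun _ => (0 : ℂ) :=
      funext fun i => by rw [hdy0 i]; simp
    rw [hX, hY, e1, e2, e3, e4]
    simp [frobNorm, Matrix.diagonal_zero]
end

section
/- Let S ∈ ℂ^{r×n} and define P = Φ_{inv}(S) Φ_f(S*) Φ_{inv}(S) Φ_{inv}(S*) for a function f : ℝ_{≥0} → ℝ_{≥0} with f(0) = 0. Then S* P S = Φ_h(S*S), where h : ℝ_{≥0} → ℝ_{≥0} is defined by h(0) = 0 and h(x) = f(√x)/√x for x > 0. -/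
open Matrix

lemma vmv_mul_vmv {p q s : ℕ} (a : Fin p → ℂ) (b c : Fin q → ℂ) (d : Fin s → ℂ) :
    vecMulVec a b * vecMulVec c d = (b ⬝ᵥ c) • vecMulVec a d := by
  ext i j
  simp only [mul_apply, vecMulVec_apply, Matrix.smul_apply, dotProduct, smul_eq_mul,
    Finset.sum_mul, Finset.mul_sum]
  apply Finset.sum_congr rfl
  intro m _
  ring

lemma sum_vmv_mul {p q s k : ℕ} (a : Fin k → Fin p → ℂ) (b : Fin k → Fin q → ℂ)
    (e : Fin k → Fin s → ℂ)
    (hb : ∀ i j, star (b i) ⬝ᵥ b j = if i = j then 1 else 0) (c d : Fin k → ℂ) :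
    (∑ i, c i • vecMulVec (a i) (star (b i))) * (∑ j, d j • vecMulVec (b j) (star (e j))) =
      ∑ i, (c i * d i) • vecMulVec (a i) (star (e i)) := by
  rw [Matrix.sum_mul]
  simp_rw [Matrix.mul_sum]
  have : ∀ i j, (c i • vecMulVec (a i) (star (b i))) * (d j • vecMulVec (b j) (star (e j)))
      = (if i = j then (c i * d j) • vecMulVec (a i) (star (e j)) else 0) := by
    intro i j
    rw [Matrix.smul_mul, Matrix.mul_smul, vmv_mul_vmv, hb i j]
    split_ifs with hij
    · simp [smul_smul, mul_comm]
    · simp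
  simp only [this]
  simp

/-- Let `S = Σᵢ σᵢ uᵢ vᵢ*` be a (compact) SVD with positive singular values, and
`P = Φ_inv(S) Φ_f(S*) Φ_inv(S) Φ_inv(S*)`. Then `S* P S = Φ_h(S*S)` where
`h(x) = f(√x)/√x` for `x > 0` and `h(0) = 0`; here
`Φ_h(S*S) = Σᵢ h(σᵢ²) vᵢ vᵢ*` applies `h` to the eigenvalues of `S*S`. -/
theorem core_identity {r n k : ℕ}
    (σ : Fin k → ℝ) (u : Fin k → Fin r → ℂ) (v : Fin k → Fin n → ℂ)
    (hu : ∀ i j, star (u i) ⬝ᵥ u j = if i = j then 1 else 0)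
    (hv : ∀ i j, star (v i) ⬝ᵥ v j = if i = j then 1 else 0)
    (hσ : ∀ i, 0 < σ i)
    (S : Matrix (Fin r) (Fin n) ℂ)
    (hS : S = ∑ i, ((σ i : ℝ) : ℂ) • vecMulVec (u i) (star (v i)))
    (f h : ℝ → ℝ) (hf0 : f 0 = 0) (hfnn : ∀ x, 0 ≤ x → 0 ≤ f x)
    (hh0 : h 0 = 0) (hh : ∀ x > 0, h x = f (Real.sqrt x) / Real.sqrt x) :
    Sᴴ *
      ((∑ i, (((σ i)⁻¹ : ℝ) : ℂ) • vecMulVec (u i) (star (v i))) *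
        (∑ i, ((f (σ i) : ℝ) : ℂ) • vecMulVec (v i) (star (u i))) *
        (∑ i, (((σ i)⁻¹ : ℝ) : ℂ) • vecMulVec (u i) (star (v i))) *
        (∑ i, (((σ i)⁻¹ : ℝ) : ℂ) • vecMulVec (v i) (star (u i)))) *
      S =
    ∑ i, ((h ((σ i) ^ 2) : ℝ) : ℂ) • vecMulVec (v i) (star (v i)) := by
  have hSH : Sᴴ = ∑ i, ((σ i : ℝ) : ℂ) • vecMulVec (v i) (star (u i)) := by
    rw [hS, conjTranspose_sum]
    apply Finset.sum_congr rfl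
    intro i _
    ext a b
    simp [conjTranspose_apply, vecMulVec_apply, mul_comm]
  rw [hSH, hS]
  rw [sum_vmv_mul u v u hv, sum_vmv_mul u u v hu, sum_vmv_mul u v u hv,
    sum_vmv_mul v u u hu, sum_vmv_mul v u v hu]
  apply Finset.sum_congr rfl
  intro i _
  congr 1
  have hσi := hσ i
  have hs : Real.sqrt ((σ i) ^ 2) = σ i := Real.sqrt_sq hσi.le
  rw [hh _ (by positivity), hs]
  have : (σ i : ℂ) ≠ 0 := by exact_mod_cast hσi.ne'
  push_cast
  field_simp
end

section
/- Let A ∈ ℂ^{m×n} and f : ℝ_{≥0} → ℝ_{≥0} with f(0) = 0. Define h : ℝ_{≥0} → ℝ_{≥0} by h(0) = 0 and h(x) = f(√x)/√x for x > 0. Then Φ_h(A*A) · A* = Φ_f(A*). -/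
open Matrix

lemma aux_vecMulVec_mul {n p m : Type*} [Fintype p] (a : n → ℂ) (b c : p → ℂ) (d : m → ℂ) :
    vecMulVec a b * vecMulVec c d = (b ⬝ᵥ c) • vecMulVec a d := by
  ext i j
  simp only [mul_apply, vecMulVec_apply, Matrix.smul_apply, dotProduct, smul_eq_mul,
    Finset.sum_mul]
  exact Finset.sum_congr rfl fun x _ => by ring

/-- Let `A = Σᵢ σᵢ uᵢ vᵢ*` be a (compact) SVD with positive singular values, `f(0) = 0`, and
`h(x) = f(√x)/√x` for `x > 0`, `h(0) = 0`. Then `Φ_h(A*A) · A* = Φ_f(A*)`, where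
`Φ_h(A*A) = Σᵢ h(σᵢ²) vᵢ vᵢ*` and `Φ_f(A*) = Σᵢ f(σᵢ) vᵢ uᵢ*`. -/
theorem svt_h_mul_conjTranspose {m n k : ℕ}
    (σ : Fin k → ℝ) (u : Fin k → Fin m → ℂ) (v : Fin k → Fin n → ℂ)
    (hu : ∀ i j, star (u i) ⬝ᵥ u j = if i = j then 1 else 0)
    (hv : ∀ i j, star (v i) ⬝ᵥ v j = if i = j then 1 else 0)
    (hσ : ∀ i, 0 < σ i)
    (A : Matrix (Fin m) (Fin n) ℂ)
    (hA : A = ∑ i, ((σ i : ℝ) : ℂ) • vecMulVec (u i) (star (v i)))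
    (f h : ℝ → ℝ) (hf0 : f 0 = 0) (hfnn : ∀ x, 0 ≤ x → 0 ≤ f x)
    (hh0 : h 0 = 0) (hh : ∀ x > 0, h x = f (Real.sqrt x) / Real.sqrt x) :
    (∑ i, ((h ((σ i) ^ 2) : ℝ) : ℂ) • vecMulVec (v i) (star (v i))) * Aᴴ =
      ∑ i, ((f (σ i) : ℝ) : ℂ) • vecMulVec (v i) (star (u i)) := by
  have hAH : Aᴴ = ∑ j, ((σ j : ℝ) : ℂ) • vecMulVec (v j) (star (u j)) := by
    rw [hA, conjTranspose_sum]
    refine Finset.sum_congr rfl fun j _ => ?_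
    rw [conjTranspose_smul]
    congr 1
    · simp
    · ext a b; simp [vecMulVec_apply, conjTranspose_apply, mul_comm]
  rw [hAH, Matrix.sum_mul]
  simp only [Matrix.mul_sum]
  refine Finset.sum_congr rfl fun i _ => ?_
  have key : ∀ j, (((h (σ i ^ 2) : ℝ) : ℂ) • vecMulVec (v i) (star (v i))) *
      (((σ j : ℝ) : ℂ) • vecMulVec (v j) (star (u j))) =
      if i = j then ((f (σ i) : ℝ) : ℂ) • vecMulVec (v i) (star (u j)) else 0 := by
    intro j
    rw [Matrix.smul_mul, Matrix.mul_smul, aux_vecMulVec_mul, hv i j, smul_smul, smul_smul]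
    split_ifs with hij
    · subst hij
      rw [mul_one]
      congr 1
      have hσi := hσ i
      have hsq : Real.sqrt (σ i ^ 2) = σ i := Real.sqrt_sq hσi.le
      rw [hh (σ i ^ 2) (by positivity), hsq]
      push_cast
      field_simp
      rw [mul_div_assoc, div_self (by exact_mod_cast hσi.ne' : (σ i : ℂ) ≠ 0), mul_one]
    · simp
  rw [Finset.sum_congr rfl (fun j _ => key j)]
  simp
end

section
/- Let A ∈ ℂ^{m×n} with largest singular value σ_max(A) = ‖A‖ and smallest nonzero singular value σ_min(A) = ‖A‖/κ₂ (κ₂ ≥ 1), and let f, h be as follows: f : ℝ_{≥0} → ℝ_{≥0} with f(0) = 0, differentiable on the interval L = [‖A‖/(√2 κ₂), (‖A‖/(√2 κ₂))·√(2κ₂² + 1)], and h(x) = f(√x)/√x for x > 0, h(0) = 0. Then for every x in the interval Q = [‖A‖²/(2κ₂²), (‖A‖²/(2κ₂²))(2κ₂² + 1)], |h'(x)| + |h(x)/x| ≤ (κ₂/‖A‖)² · ( φ + 3√2 Ω κ₂/‖A‖ ), where Ω = max_{σ ∈ L} f(σ) and φ = max_{σ ∈ L} |f'(σ)|. -/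
open Matrix

/-- The spectral (operator) norm of a matrix (its largest singular value). -/
noncomputable def specNorm {m n : Type*} [Fintype m] [Fintype n] (M : Matrix m n ℂ) : ℝ :=
  sSup ((fun v : n → ℂ => l2norm (M.mulVec v)) '' {v : n → ℂ | l2norm v ≤ 1})

/-- The smallest nonzero singular value of `M`. -/
noncomputable def sigMinNZ {m n : ℕ} (M : Matrix (Fin m) (Fin n) ℂ) : ℝ :=
  sInf {x : ℝ | 0 < x ∧
    x ^ 2 ∈ Set.range (Matrix.isHermitian_conjTranspose_mul_self M).eigenvalues}

/-- Bound on `|h'| + |h(x)/x|` on the interval `Q`, where `h(x) = f(√x)/√x`, `h(0) = 0`,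
`a = ‖A‖` is the largest singular value of `A`, `κ = ‖A‖/σ_min(A)` is its condition number,
`L = [a/(√2κ), (a/(√2κ))√(2κ²+1)]`, `Q = [a²/(2κ²), (a²/(2κ²))(2κ²+1)]`,
`Ω ≥ max_{σ∈L} f(σ)` and `φ ≥ max_{σ∈L} |f'(σ)|`. -/
theorem h_derivative_bound {m n : ℕ}
    (A : Matrix (Fin m) (Fin n) ℂ) (hA : A ≠ 0)
    (a κ : ℝ) (ha : a = specNorm A) (ha0 : 0 < a)
    (hκ : κ = specNorm A / sigMinNZ A) (hκ1 : 1 ≤ κ)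
    (f h : ℝ → ℝ) (hf0 : f 0 = 0) (hfnn : ∀ x, 0 ≤ x → 0 ≤ f x)
    (hh0 : h 0 = 0) (hh : ∀ x > (0 : ℝ), h x = f (Real.sqrt x) / Real.sqrt x)
    (hdiff : ∀ σ ∈ Set.Icc (a / (Real.sqrt 2 * κ))
        (a / (Real.sqrt 2 * κ) * Real.sqrt (2 * κ ^ 2 + 1)), DifferentiableAt ℝ f σ)
    (Ω φ : ℝ)
    (hΩ : ∀ σ ∈ Set.Icc (a / (Real.sqrt 2 * κ))
        (a / (Real.sqrt 2 * κ) * Real.sqrt (2 * κ ^ 2 + 1)), f σ ≤ Ω)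
    (hφ : ∀ σ ∈ Set.Icc (a / (Real.sqrt 2 * κ))
        (a / (Real.sqrt 2 * κ) * Real.sqrt (2 * κ ^ 2 + 1)), |deriv f σ| ≤ φ) :
    ∀ x ∈ Set.Icc (a ^ 2 / (2 * κ ^ 2)) (a ^ 2 / (2 * κ ^ 2) * (2 * κ ^ 2 + 1)),
      |deriv h x| + |h x / x| ≤
        (κ / a) ^ 2 * (φ + 3 * Real.sqrt 2 * Ω * κ / a) := by
  intro x hx
  have hκ0 : (0:ℝ) < κ := lt_of_lt_of_le one_pos hκ1
  have hs2 : (0:ℝ) < Real.sqrt 2 := Real.sqrt_pos.mpr (by norm_num)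
  set l := a / (Real.sqrt 2 * κ) with hl
  have hl0 : 0 < l := div_pos ha0 (mul_pos hs2 hκ0)
  have hlsq : l ^ 2 = a ^ 2 / (2 * κ ^ 2) := by
    rw [hl, div_pow, mul_pow, Real.sq_sqrt (by norm_num : (0:ℝ) ≤ 2)]
  rw [← hlsq] at hx
  have x0 : 0 < x := lt_of_lt_of_le (by positivity) hx.1
  set s := Real.sqrt x with hsdef
  have hs0 : 0 < s := Real.sqrt_pos.mpr x0
  have hsl : l ≤ s := by
    have := Real.sqrt_le_sqrt hx.1
    rwa [Real.sqrt_sq hl0.le] at this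
  have hsu : s ≤ l * Real.sqrt (2 * κ ^ 2 + 1) := by
    have := Real.sqrt_le_sqrt hx.2
    rwa [Real.sqrt_mul (sq_nonneg l), Real.sqrt_sq hl0.le] at this
  have hsL : s ∈ Set.Icc l (l * Real.sqrt (2 * κ ^ 2 + 1)) := ⟨hsl, hsu⟩
  have hev : h =ᶠ[nhds x] fun y => f (Real.sqrt y) / Real.sqrt y := by
    filter_upwards [eventually_gt_nhds x0] with y hy
    exact hh y hy
  have hsqrt : HasDerivAt Real.sqrt (1 / (2 * s)) x := Real.hasDerivAt_sqrt (ne_of_gt x0)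
  have hfd : HasDerivAt f (deriv f s) s := (hdiff s hsL).hasDerivAt
  have h1 : HasDerivAt (fun y => f (Real.sqrt y)) (deriv f s * (1 / (2 * s))) x :=
    hfd.comp x hsqrt
  have h2 : HasDerivAt (fun y => (Real.sqrt y)⁻¹) (-(1 / (2 * s)) / s ^ 2) x :=
    hsqrt.inv (ne_of_gt hs0)
  have h3 : HasDerivAt (fun y => f (Real.sqrt y) * (Real.sqrt y)⁻¹)
      (deriv f s * (1 / (2 * s)) * s⁻¹ + f s * (-(1 / (2 * s)) / s ^ 2)) x := h1.mul h2
  have hderiv : deriv h x = deriv f s / (2 * s ^ 2) - f s / (2 * s ^ 3) := by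
    rw [hev.deriv_eq]
    have heq : (fun y => f (Real.sqrt y) / Real.sqrt y)
        = fun y => f (Real.sqrt y) * (Real.sqrt y)⁻¹ := by
      funext y; rw [div_eq_mul_inv]
    rw [heq, h3.deriv]
    field_simp
    ring
  have fnn : 0 ≤ f s := hfnn s hs0.le
  have hφs := hφ s hsL
  have hΩs := hΩ s hsL
  have hφ0 : 0 ≤ φ := le_trans (abs_nonneg _) hφs
  have hΩ0 : 0 ≤ Ω := le_trans fnn hΩs
  have habs : |deriv h x| ≤ φ / (2 * s ^ 2) + Ω / (2 * s ^ 3) := by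
    rw [hderiv]
    calc |deriv f s / (2 * s ^ 2) - f s / (2 * s ^ 3)|
        ≤ |deriv f s / (2 * s ^ 2)| + |f s / (2 * s ^ 3)| := abs_sub _ _
      _ = |deriv f s| / (2 * s ^ 2) + f s / (2 * s ^ 3) := by
          rw [abs_div, abs_div, abs_of_pos (by positivity : (0:ℝ) < 2 * s ^ 2),
            abs_of_pos (by positivity : (0:ℝ) < 2 * s ^ 3), abs_of_nonneg fnn]
      _ ≤ φ / (2 * s ^ 2) + Ω / (2 * s ^ 3) := by gcongr
  have hxseq : x = s ^ 2 := (Real.sq_sqrt x0.le).symm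
  have hhx : |h x / x| ≤ Ω / s ^ 3 := by
    have : h x / x = f s / s ^ 3 := by
      rw [hh x x0, ← hsdef, hxseq, div_div]
      congr 1
      ring
    rw [this, abs_of_nonneg (by positivity)]
    gcongr
  have hinv : s⁻¹ ≤ Real.sqrt 2 * κ / a := by
    have h' : s⁻¹ ≤ l⁻¹ := by
      apply inv_anti₀ hl0 hsl
    rwa [hl, inv_div] at h'
  have hinv0 : (0:ℝ) ≤ s⁻¹ := by positivity
  have key : φ / (2 * s ^ 2) + Ω / (2 * s ^ 3) + Ω / s ^ 3
      ≤ (κ / a) ^ 2 * (φ + 3 * Real.sqrt 2 * Ω * κ / a) := by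
    have e : φ / (2 * s ^ 2) + Ω / (2 * s ^ 3) + Ω / s ^ 3
        = φ * s⁻¹ ^ 2 / 2 + 3 / 2 * Ω * s⁻¹ ^ 3 := by
      field_simp
      ring
    rw [e]
    have step : φ * s⁻¹ ^ 2 / 2 + 3 / 2 * Ω * s⁻¹ ^ 3
        ≤ φ * (Real.sqrt 2 * κ / a) ^ 2 / 2 + 3 / 2 * Ω * (Real.sqrt 2 * κ / a) ^ 3 := by
      gcongr
    refine step.trans (le_of_eq ?_)
    have h2 : (Real.sqrt 2 : ℝ) ^ 2 = 2 := Real.sq_sqrt (by norm_num)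
    have h3 : (Real.sqrt 2 : ℝ) ^ 3 = 2 * Real.sqrt 2 := by
      rw [pow_succ, h2]
    rw [div_pow, div_pow, mul_pow, mul_pow, h2, h3]
    field_simp
  calc |deriv h x| + |h x / x| ≤ (φ / (2 * s ^ 2) + Ω / (2 * s ^ 3)) + Ω / s ^ 3 :=
        add_le_add habs hhx
    _ ≤ _ := key
end
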